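/- In the group 𝒜, for every f ∈ E and every j ∈ ℤ, the conjugation identities d_j^{-1} a_f d_j = a_{f_j^+} and d_j a_f d_j^{-1} = a_{f_j^-} hold. -/

import Mathlib

/-!
STATEMENT 8: In the group `𝒜` (given by 9 generators `a, b, c, t₁, t₁', u₁, u₂, d, e` and the
20 defining relations listed in the context), for every finitely supported `f : ℤ → ℤ` and
every `j ∈ ℤ` the conjugation identities
`d_j⁻¹ a_f d_j = a_{f_j⁺}` and `d_j a_f d_j⁻¹ = a_{f_j⁻}` hold,
where `b_i = c⁻ⁱ b cⁱ`, `d_i = e⁻ⁱ d eⁱ`, `b_f = ∏ b_i^{f(i)}` (increasing order of `i` over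
the support), `a_f = b_f⁻¹ a b_f`, and `f_j^±` agrees with `f` except at `j`, where its value
is `f(j) ± 1`.
-/

noncomputable section

/-- The free group on the 9 generators of `𝒜`. -/
abbrev F9 := FreeGroup (Fin 9)

def aF : F9 := FreeGroup.of 0
def bF : F9 := FreeGroup.of 1
def cF : F9 := FreeGroup.of 2
def t1F : F9 := FreeGroup.of 3
def t1F' : F9 := FreeGroup.of 4
def u1F : F9 := FreeGroup.of 5
def u2F : F9 := FreeGroup.of 6
def dF : F9 := FreeGroup.of 7
def eF : F9 := FreeGroup.of 8

/-- Conjugation `u^v = v⁻¹ u v`. -/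
def cj (u v : F9) : F9 := v⁻¹ * u * v

/-- The 20 defining relators of the group `𝒜`. -/
def relsA : Set F9 :=
  { cj bF t1F * bF⁻¹,
    cj bF t1F' * (cj bF cF⁻¹)⁻¹,
    cj cF t1F * (cF ^ 2)⁻¹,
    cj cF t1F' * (cF ^ 2)⁻¹,
    cj (cj bF cF) u1F * (cj bF cF)⁻¹,
    cj t1F u1F * t1F⁻¹,
    cj t1F' u1F * t1F'⁻¹,
    cj aF u2F * aF⁻¹,
    cj bF u2F * bF⁻¹,
    cj t1F u2F * t1F⁻¹,
    cj t1F' u2F * t1F'⁻¹,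
    cj (cj aF u1F) dF * (cj aF u1F)⁻¹,
    cj (cj bF u1F) dF * (cj bF u1F)⁻¹,
    cj (cj cF u1F) dF * (cj cF u1F)⁻¹,
    cj aF (u2F * dF) * (cj aF (bF * u2F))⁻¹,
    cj bF (u2F * dF) * (cj bF u2F)⁻¹,
    cj cF (u2F * dF) * (cj cF (bF * u2F))⁻¹,
    cj aF eF * aF⁻¹,
    cj bF eF * (cj bF cF)⁻¹,
    cj cF eF * cF⁻¹ }

/-- The group `𝒜`. -/
abbrev GroupA := PresentedGroup relsA

def aA : GroupA := PresentedGroup.of 0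
def bA : GroupA := PresentedGroup.of 1
def cA : GroupA := PresentedGroup.of 2
def dA : GroupA := PresentedGroup.of 7
def eA : GroupA := PresentedGroup.of 8

/-- `b_i = c⁻ⁱ b cⁱ` in `𝒜`. -/
def bIdx (i : ℤ) : GroupA := cA ^ (-i) * bA * cA ^ i

/-- `d_i = e⁻ⁱ d eⁱ` in `𝒜`. -/
def dIdx (i : ℤ) : GroupA := eA ^ (-i) * dA * eA ^ i

/-- `b_f = ∏ b_i^{f(i)}`, the product over the support of `f` in increasing order of `i`. -/
def bW (f : ℤ →₀ ℤ) : GroupA :=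
  ((f.support.sort (· ≤ ·)).map fun i => bIdx i ^ f i).prod

/-- `a_f = b_f⁻¹ a b_f`. -/
def aW (f : ℤ →₀ ℤ) : GroupA := (bW f)⁻¹ * aA * bW f


/-! ## Infrastructure -/

/-- Conjugation `x ↦ v⁻¹ x v` as a monoid hom. -/
def cn (v : GroupA) : GroupA →* GroupA where
  toFun x := v⁻¹ * x * v
  map_one' := by group
  map_mul' x y := by group

lemma cn_apply (v x : GroupA) : cn v x = v⁻¹ * x * v := rfl

lemma cn_mul (v w x : GroupA) : cn (v * w) x = cn w (cn v x) := by
  simp [cn_apply, mul_assoc]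

lemma cn_of_commute {v x : GroupA} (h : Commute x v) : cn v x = x := by
  rw [cn_apply, mul_assoc, h.eq, inv_mul_cancel_left]

lemma commute_of_cn {v x : GroupA} (h : cn v x = x) : Commute x v := by
  have h2 : v * (v⁻¹ * x * v) = v * x := congrArg (v * ·) h
  show x * v = v * x
  simpa [mul_assoc] using h2

/-- The canonical projection. -/
def pA : F9 →* GroupA := PresentedGroup.mk relsA

lemma relA {r : F9} (h : r ∈ relsA) : pA r = 1 :=
  (QuotientGroup.eq_one_iff r).mpr (Subgroup.subset_normalClosure h)

lemma relEq {x y : F9} (h : x * y⁻¹ ∈ relsA) : pA x = pA y := by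
  have h1 := relA h
  rw [map_mul, map_inv, mul_inv_eq_one] at h1
  exact h1

def t1A : GroupA := PresentedGroup.of 3
def t1A' : GroupA := PresentedGroup.of 4
def u1A : GroupA := PresentedGroup.of 5
def u2A : GroupA := PresentedGroup.of 6

lemma pA_a : pA aF = aA := rfl
lemma pA_b : pA bF = bA := rfl
lemma pA_c : pA cF = cA := rfl
lemma pA_t1 : pA t1F = t1A := rfl
lemma pA_t1' : pA t1F' = t1A' := rfl
lemma pA_u1 : pA u1F = u1A := rfl
lemma pA_u2 : pA u2F = u2A := rfl
lemma pA_d : pA dF = dA := rfl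
lemma pA_e : pA eF = eA := rfl

lemma pA_cj (u v : F9) : pA (cj u v) = cn (pA v) (pA u) := by
  simp [cj, cn_apply, map_mul, map_inv]

section rels
open Set

lemma r1 : cn t1A bA = bA := by
  have := relEq (show cj bF t1F * bF⁻¹ ∈ relsA from Set.mem_insert _ _)
  rwa [pA_cj, pA_b, pA_t1] at this

lemma r2 : cn t1A' bA = cA * bA * cA⁻¹ := by
  have := relEq (show cj bF t1F' * (cj bF cF⁻¹)⁻¹ ∈ relsA from
    Set.mem_insert_of_mem _ (Set.mem_insert _ _))
  rw [pA_cj, pA_cj, pA_b, pA_t1', map_inv, pA_c] at this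
  rw [this, cn_apply]
  group

end rels
lemma r3 : cn t1A cA = cA ^ 2 := by
  have h := relEq (x := cj cF t1F) (y := cF ^ 2) (h := by unfold relsA; (iterate 2 apply Set.mem_insert_of_mem); first | exact Set.mem_insert _ _ | exact Set.mem_singleton _)
  simpa [pA_cj, pA_c, pA_t1, map_pow] using h

lemma r4 : cn t1A' cA = cA ^ 2 := by
  have h := relEq (x := cj cF t1F') (y := cF ^ 2) (h := by unfold relsA; (iterate 3 apply Set.mem_insert_of_mem); first | exact Set.mem_insert _ _ | exact Set.mem_singleton _)
  simpa [pA_cj, pA_c, pA_t1', map_pow] using h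

lemma r5 : cn u1A (cn cA bA) = cn cA bA := by
  have h := relEq (x := cj (cj bF cF) u1F) (y := cj bF cF) (h := by unfold relsA; (iterate 4 apply Set.mem_insert_of_mem); first | exact Set.mem_insert _ _ | exact Set.mem_singleton _)
  simpa [pA_cj, pA_b, pA_c, pA_u1] using h

lemma r6 : cn u1A t1A = t1A := by
  have h := relEq (x := cj t1F u1F) (y := t1F) (h := by unfold relsA; (iterate 5 apply Set.mem_insert_of_mem); first | exact Set.mem_insert _ _ | exact Set.mem_singleton _)
  simpa [pA_cj, pA_t1, pA_u1] using h

lemma r7 : cn u1A t1A' = t1A' := by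
  have h := relEq (x := cj t1F' u1F) (y := t1F') (h := by unfold relsA; (iterate 6 apply Set.mem_insert_of_mem); first | exact Set.mem_insert _ _ | exact Set.mem_singleton _)
  simpa [pA_cj, pA_t1', pA_u1] using h

lemma r8 : cn u2A aA = aA := by
  have h := relEq (x := cj aF u2F) (y := aF) (h := by unfold relsA; (iterate 7 apply Set.mem_insert_of_mem); first | exact Set.mem_insert _ _ | exact Set.mem_singleton _)
  simpa [pA_cj, pA_a, pA_u2] using h

lemma r9 : cn u2A bA = bA := by
  have h := relEq (x := cj bF u2F) (y := bF) (h := by unfold relsA; (iterate 8 apply Set.mem_insert_of_mem); first | exact Set.mem_insert _ _ | exact Set.mem_singleton _)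
  simpa [pA_cj, pA_b, pA_u2] using h

lemma r10 : cn u2A t1A = t1A := by
  have h := relEq (x := cj t1F u2F) (y := t1F) (h := by unfold relsA; (iterate 9 apply Set.mem_insert_of_mem); first | exact Set.mem_insert _ _ | exact Set.mem_singleton _)
  simpa [pA_cj, pA_t1, pA_u2] using h

lemma r11 : cn u2A t1A' = t1A' := by
  have h := relEq (x := cj t1F' u2F) (y := t1F') (h := by unfold relsA; (iterate 10 apply Set.mem_insert_of_mem); first | exact Set.mem_insert _ _ | exact Set.mem_singleton _)
  simpa [pA_cj, pA_t1', pA_u2] using h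

lemma r12 : cn dA (cn u1A aA) = cn u1A aA := by
  have h := relEq (x := cj (cj aF u1F) dF) (y := cj aF u1F) (h := by unfold relsA; (iterate 11 apply Set.mem_insert_of_mem); first | exact Set.mem_insert _ _ | exact Set.mem_singleton _)
  simpa [pA_cj, pA_a, pA_u1, pA_d] using h

lemma r13 : cn dA (cn u1A bA) = cn u1A bA := by
  have h := relEq (x := cj (cj bF u1F) dF) (y := cj bF u1F) (h := by unfold relsA; (iterate 12 apply Set.mem_insert_of_mem); first | exact Set.mem_insert _ _ | exact Set.mem_singleton _)
  simpa [pA_cj, pA_b, pA_u1, pA_d] using h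

lemma r14 : cn dA (cn u1A cA) = cn u1A cA := by
  have h := relEq (x := cj (cj cF u1F) dF) (y := cj cF u1F) (h := by unfold relsA; (iterate 13 apply Set.mem_insert_of_mem); first | exact Set.mem_insert _ _ | exact Set.mem_singleton _)
  simpa [pA_cj, pA_c, pA_u1, pA_d] using h

lemma r15 : cn (u2A * dA) aA = cn (bA * u2A) aA := by
  have h := relEq (x := cj aF (u2F * dF)) (y := cj aF (bF * u2F)) (h := by unfold relsA; (iterate 14 apply Set.mem_insert_of_mem); first | exact Set.mem_insert _ _ | exact Set.mem_singleton _)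
  simpa [pA_cj, pA_a, pA_b, pA_u2, pA_d, map_mul] using h

lemma r16 : cn (u2A * dA) bA = cn u2A bA := by
  have h := relEq (x := cj bF (u2F * dF)) (y := cj bF u2F) (h := by unfold relsA; (iterate 15 apply Set.mem_insert_of_mem); first | exact Set.mem_insert _ _ | exact Set.mem_singleton _)
  simpa [pA_cj, pA_b, pA_u2, pA_d, map_mul] using h

lemma r17 : cn (u2A * dA) cA = cn (bA * u2A) cA := by
  have h := relEq (x := cj cF (u2F * dF)) (y := cj cF (bF * u2F)) (h := by unfold relsA; (iterate 16 apply Set.mem_insert_of_mem); first | exact Set.mem_insert _ _ | exact Set.mem_singleton _)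
  simpa [pA_cj, pA_b, pA_c, pA_u2, pA_d, map_mul] using h

lemma r18 : cn eA aA = aA := by
  have h := relEq (x := cj aF eF) (y := aF) (h := by unfold relsA; (iterate 17 apply Set.mem_insert_of_mem); first | exact Set.mem_insert _ _ | exact Set.mem_singleton _)
  simpa [pA_cj, pA_a, pA_e] using h

lemma r19 : cn eA bA = cn cA bA := by
  have h := relEq (x := cj bF eF) (y := cj bF cF) (h := by unfold relsA; (iterate 18 apply Set.mem_insert_of_mem); first | exact Set.mem_insert _ _ | exact Set.mem_singleton _)
  simpa [pA_cj, pA_b, pA_c, pA_e] using h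

lemma r20 : cn eA cA = cA := by
  have h := relEq (x := cj cF eF) (y := cF) (h := by unfold relsA; (iterate 19 apply Set.mem_insert_of_mem); first | exact Set.mem_insert _ _ | exact Set.mem_singleton _)
  simpa [pA_cj, pA_c, pA_e] using h
/-! ## Derived commutation and conjugation lemmas -/

lemma comm_a_u2 : Commute aA u2A := commute_of_cn r8
lemma comm_b_u2 : Commute bA u2A := commute_of_cn r9
lemma comm_t1_u1 : Commute t1A u1A := commute_of_cn r6
lemma comm_t1'_u1 : Commute t1A' u1A := commute_of_cn r7
lemma comm_a_e : Commute aA eA := commute_of_cn r18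
lemma comm_c_e : Commute cA eA := commute_of_cn r20

lemma bIdx_zero : bIdx 0 = bA := by simp [bIdx]
lemma bIdx_one : bIdx 1 = cn cA bA := by simp [bIdx, cn_apply]

lemma cn_cn (v x y : GroupA) : cn v (cn x y) = cn (cn v x) (cn v y) := by
  simp only [cn_apply]; group

lemma cn_t1_czpow (n : ℤ) : cn t1A (cA ^ n) = cA ^ (2 * n) := by
  rw [map_zpow, r3, ← zpow_natCast cA 2, ← zpow_mul]
  norm_num

lemma cn_t1'_czpow (n : ℤ) : cn t1A' (cA ^ n) = cA ^ (2 * n) := by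
  rw [map_zpow, r4, ← zpow_natCast cA 2, ← zpow_mul]
  norm_num

lemma cn_bIdx_t1 (i : ℤ) : cn t1A (bIdx i) = bIdx (2 * i) := by
  simp only [bIdx, map_mul, cn_t1_czpow, r1]
  group

lemma cn_bIdx_t1' (i : ℤ) : cn t1A' (bIdx i) = bIdx (2 * i - 1) := by
  simp only [bIdx, map_mul, cn_t1'_czpow, r2]
  group

lemma cn_epow_b (j : ℤ) : cn (eA ^ j) bA = bIdx j := by
  have h1 : bA * eA = eA * (cA⁻¹ * bA * cA) := by
    have h := congrArg (eA * ·) r19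
    simp only [cn_apply] at h
    simpa [mul_assoc] using h
  have hbec : Commute bA (eA * cA⁻¹) := by
    show bA * (eA * cA⁻¹) = (eA * cA⁻¹) * bA
    rw [← mul_assoc, h1]; group
  have hec : Commute eA cA⁻¹ := comm_c_e.symm.inv_right
  have hsplit : eA ^ j = (eA * cA⁻¹) ^ j * cA ^ j := by
    rw [hec.mul_zpow]; group
  rw [hsplit, cn_mul, cn_of_commute (hbec.zpow_right j)]
  simp [bIdx, cn_apply, zpow_neg]

lemma cn_epow_czpow (j n : ℤ) : cn (eA ^ j) (cA ^ n) = cA ^ n :=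
  cn_of_commute ((comm_c_e.zpow_left n).zpow_right j)

lemma cn_epow_a (j : ℤ) : cn (eA ^ j) aA = aA :=
  cn_of_commute (comm_a_e.zpow_right j)

lemma cn_epow_bIdx (j i : ℤ) : cn (eA ^ j) (bIdx i) = bIdx (i + j) := by
  simp only [bIdx, map_mul, cn_epow_czpow, cn_epow_b]
  group

lemma comm_u1_cn_t1 {x : GroupA} (h : Commute u1A x) : Commute u1A (cn t1A x) := by
  rw [cn_apply]
  exact (comm_t1_u1.symm.inv_right.mul_right h).mul_right comm_t1_u1.symm

lemma comm_u1_cn_t1' {x : GroupA} (h : Commute u1A x) : Commute u1A (cn t1A' x) := by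
  rw [cn_apply]
  exact (comm_t1'_u1.symm.inv_right.mul_right h).mul_right comm_t1'_u1.symm

lemma comm_u1_bIdx_aux : ∀ n : ℕ, ∀ i : ℤ, 1 ≤ i → i ≤ (n : ℤ) → Commute u1A (bIdx i) := by
  intro n
  induction n with
  | zero => intro i h1 h2; omega
  | succ n ih =>
    intro i h1 h2
    rcases eq_or_lt_of_le h1 with heq | hgt
    · rw [← heq, bIdx_one]
      exact (commute_of_cn r5).symm
    · rcases Int.even_or_odd i with ⟨k, hk⟩ | ⟨k, hk⟩
      · have hb : bIdx i = cn t1A (bIdx k) := by rw [cn_bIdx_t1]; congr 1; omega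
        rw [hb]
        exact comm_u1_cn_t1 (ih k (by omega) (by omega))
      · have hb : bIdx i = cn t1A' (bIdx (k + 1)) := by rw [cn_bIdx_t1']; congr 1; omega
        rw [hb]
        exact comm_u1_cn_t1' (ih (k + 1) (by omega) (by omega))

lemma comm_u1_bIdx {i : ℤ} (h : 1 ≤ i) : Commute u1A (bIdx i) :=
  comm_u1_bIdx_aux i.toNat i h (by omega)

lemma comm_u2_cn_t1 {x : GroupA} (h : Commute u2A x) : Commute u2A (cn t1A x) := by
  rw [cn_apply]
  exact (((commute_of_cn r10).symm.inv_right).mul_right h).mul_right (commute_of_cn r10).symm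

lemma comm_u2_cn_t1' {x : GroupA} (h : Commute u2A x) : Commute u2A (cn t1A' x) := by
  rw [cn_apply]
  exact (((commute_of_cn r11).symm.inv_right).mul_right h).mul_right (commute_of_cn r11).symm

lemma comm_u2_bIdx_aux : ∀ n : ℕ, ∀ i : ℤ, i ≤ 0 → -i ≤ (n : ℤ) → Commute u2A (bIdx i) := by
  intro n
  induction n with
  | zero =>
    intro i h1 h2
    have : i = 0 := by omega
    rw [this, bIdx_zero]; exact comm_b_u2.symm
  | succ n ih =>
    intro i h1 h2
    rcases eq_or_lt_of_le h1 with heq | hlt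
    · rw [heq, bIdx_zero]; exact comm_b_u2.symm
    · rcases Int.even_or_odd i with ⟨k, hk⟩ | ⟨k, hk⟩
      · have hb : bIdx i = cn t1A (bIdx k) := by rw [cn_bIdx_t1]; congr 1; omega
        rw [hb]
        exact comm_u2_cn_t1 (ih k (by omega) (by omega))
      · have hb : bIdx i = cn t1A' (bIdx (k + 1)) := by rw [cn_bIdx_t1']; congr 1; omega
        rw [hb]
        exact comm_u2_cn_t1' (ih (k + 1) (by omega) (by omega))

lemma comm_u2_bIdx {i : ℤ} (h : i ≤ 0) : Commute u2A (bIdx i) :=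
  comm_u2_bIdx_aux (-i).toNat i h (by omega)

/-- The subgroup generated by `a`, `b`, `c`. -/
def Sabc : Subgroup GroupA := Subgroup.closure {aA, bA, cA}

lemma bIdx_mem (i : ℤ) : bIdx i ∈ Sabc := by
  have hb : bA ∈ Sabc := Subgroup.subset_closure (by simp)
  have hc : cA ∈ Sabc := Subgroup.subset_closure (by simp)
  exact mul_mem (mul_mem (zpow_mem hc _) hb) (zpow_mem hc _)

lemma comm_d_cn_u1 {x : GroupA} (hx : x ∈ Sabc) : Commute dA (cn u1A x) := by
  induction hx using Subgroup.closure_induction with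
  | mem y hy =>
    rcases hy with h | h | h <;> subst h
    · exact (commute_of_cn r12).symm
    · exact (commute_of_cn r13).symm
    · exact (commute_of_cn r14).symm
  | one => rw [map_one]; exact Commute.one_right _
  | mul y z _ _ hy hz => rw [map_mul]; exact hy.mul_right hz
  | inv y _ hy => rw [map_inv]; exact hy.inv_right

lemma cn_d_bIdx_pos {i : ℤ} (h : 1 ≤ i) : cn dA (bIdx i) = bIdx i := by
  have h1 : cn u1A (bIdx i) = bIdx i := cn_of_commute (comm_u1_bIdx h).symm
  have h2 := comm_d_cn_u1 (bIdx_mem i)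
  rw [h1] at h2
  exact cn_of_commute h2.symm

lemma cn_u2d_eq_bu2 {x : GroupA} (hx : x ∈ Sabc) : cn (u2A * dA) x = cn (bA * u2A) x := by
  induction hx using Subgroup.closure_induction with
  | mem y hy =>
    rcases hy with h | h | h <;> subst h
    · exact r15
    · rw [r16, cn_mul, cn_of_commute (Commute.refl bA)]
    · exact r17
  | one => rw [map_one, map_one]
  | mul y z _ _ hy hz => rw [map_mul, map_mul, hy, hz]
  | inv y _ hy => rw [map_inv, map_inv, hy]

lemma cn_d_a : cn dA aA = cn bA aA := by
  have h := cn_u2d_eq_bu2 (Subgroup.subset_closure (show aA ∈ _ by simp) : aA ∈ Sabc)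
  rw [cn_mul, cn_mul, r8] at h
  rw [h]
  refine cn_of_commute ?_
  show Commute (cn bA aA) u2A
  rw [cn_apply]
  exact ((comm_b_u2.symm.inv_right.mul_right comm_a_u2.symm).mul_right comm_b_u2.symm).symm

lemma cn_d_bIdx_nonpos {i : ℤ} (h : i ≤ 0) : cn dA (bIdx i) = cn bA (bIdx i) := by
  have hmem := cn_u2d_eq_bu2 (bIdx_mem i)
  rw [cn_mul, cn_mul, cn_of_commute (comm_u2_bIdx h).symm] at hmem
  rw [hmem]
  refine cn_of_commute ?_
  show Commute (cn bA (bIdx i)) u2A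
  rw [cn_apply]
  exact ((comm_b_u2.symm.inv_right.mul_right (comm_u2_bIdx h)).mul_right
    comm_b_u2.symm).symm

lemma cn_dIdx (j : ℤ) (x : GroupA) :
    cn (dIdx j) x = cn (eA ^ j) (cn dA (cn (eA ^ (-j)) x)) := by
  rw [show dIdx j = eA ^ (-j) * dA * eA ^ j from rfl, cn_mul, cn_mul]

lemma cn_dIdx_a (j : ℤ) : cn (dIdx j) aA = cn (bIdx j) aA := by
  rw [cn_dIdx, cn_epow_a, cn_d_a, cn_cn, cn_epow_a, cn_epow_b]

lemma cn_dIdx_bIdx (j i : ℤ) :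
    cn (dIdx j) (bIdx i) = if j < i then bIdx i else cn (bIdx j) (bIdx i) := by
  rw [cn_dIdx, cn_epow_bIdx]
  by_cases h : j < i
  · rw [if_pos h, cn_d_bIdx_pos (by omega), cn_epow_bIdx]
    congr 1; omega
  · rw [if_neg h, cn_d_bIdx_nonpos (by omega), cn_cn, cn_epow_bIdx, cn_epow_b]
    congr 2; omega
/-! ## List and Finsupp combinatorics -/

lemma split3 (j : ℤ) : ∀ L : List ℤ, L.Pairwise (· ≤ ·) →
    L = L.filter (fun i => decide (i < j)) ++ L.filter (fun i => decide (i = j)) ++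
        L.filter (fun i => decide (j < i)) := by
  intro L
  induction L with
  | nil => simp
  | cons x T ih =>
    intro hL
    have hT : T.Pairwise (· ≤ ·) := (List.pairwise_cons.mp hL).2
    have hx : ∀ y ∈ T, x ≤ y := (List.pairwise_cons.mp hL).1
    rcases lt_trichotomy x j with h | h | h
    · rw [List.filter_cons_of_pos (by simpa using h),
        List.filter_cons_of_neg (by simp; omega),
        List.filter_cons_of_neg (by simp; omega)]
      simp only [List.cons_append]
      exact congrArg (x :: ·) (ih hT)
    · rw [List.filter_cons_of_neg (by simp; omega),
        List.filter_cons_of_pos (by simpa using h),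
        List.filter_cons_of_neg (by simp; omega)]
      have hT1 : T.filter (fun i => decide (i < j)) = [] :=
        List.filter_eq_nil_iff.mpr (fun y hy => by have := hx y hy; simp; omega)
      have h2 := ih hT
      rw [hT1, List.nil_append] at h2
      rw [hT1]
      simp only [List.nil_append, List.cons_append]
      exact congrArg (x :: ·) h2
    · rw [List.filter_cons_of_neg (by simp; omega),
        List.filter_cons_of_neg (by simp; omega),
        List.filter_cons_of_pos (by simpa using h)]
      have hT1 : T.filter (fun i => decide (i < j)) = [] :=
        List.filter_eq_nil_iff.mpr (fun y hy => by have := hx y hy; simp; omega)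
      have hT2 : T.filter (fun i => decide (i = j)) = [] :=
        List.filter_eq_nil_iff.mpr (fun y hy => by have := hx y hy; simp; omega)
      have h2 := ih hT
      rw [hT1, hT2, List.nil_append, List.nil_append] at h2
      rw [hT1, hT2]
      simp only [List.nil_append]
      exact congrArg (x :: ·) h2

lemma filter_eq_singleton {j : ℤ} : ∀ L : List ℤ, L.Nodup → j ∈ L →
    L.filter (fun i => decide (i = j)) = [j] := by
  intro L
  induction L with
  | nil => intro _ hj; cases hj
  | cons x T ih =>
    intro hN hj
    rcases List.mem_cons.mp hj with h | h
    · subst h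
      rw [List.filter_cons_of_pos (by simp)]
      have : T.filter (fun i => decide (i = j)) = [] :=
        List.filter_eq_nil_iff.mpr (fun y hy => by
          have : y ≠ j := fun hyj => (List.nodup_cons.mp hN).1 (hyj ▸ hy)
          simpa using this)
      rw [this]
    · have hx : x ≠ j := fun hxj => (List.nodup_cons.mp hN).1 (hxj ▸ h)
      rw [List.filter_cons_of_neg (by simpa using hx)]
      exact ih (List.nodup_cons.mp hN).2 h

lemma prod_filter (F : ℤ → GroupA) (p : ℤ → Bool) :
    ∀ L : List ℤ, (∀ i ∈ L, p i = false → F i = 1) →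
      (L.map F).prod = ((L.filter p).map F).prod := by
  intro L
  induction L with
  | nil => simp
  | cons x T ih =>
    intro h
    cases hp : p x with
    | false =>
      rw [List.filter_cons_of_neg (by simp [hp])]
      simp only [List.map_cons, List.prod_cons]
      rw [h x List.mem_cons_self hp, one_mul,
        ih (fun i hi hpi => h i (List.mem_cons_of_mem _ hi) hpi)]
    | true =>
      rw [List.filter_cons_of_pos hp]
      simp only [List.map_cons, List.prod_cons]
      rw [ih (fun i hi hpi => h i (List.mem_cons_of_mem _ hi) hpi)]

lemma sort_filter (s : Finset ℤ) (p : ℤ → Prop) [DecidablePred p] :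
    (s.sort (· ≤ ·)).filter (fun i => decide (p i)) = (s.filter p).sort (· ≤ ·) := by
  refine (fun h1 h2 h3 => List.Perm.eq_of_pairwise' (r := (· ≤ · : ℤ → ℤ → Prop)) h2 h3 h1) ?_ ?_ ?_
  · rw [List.perm_ext_iff_of_nodup ((Finset.sort_nodup _ _).filter _) (Finset.sort_nodup _ _)]
    intro a
    simp [List.mem_filter, Finset.mem_sort, Finset.mem_filter]
  · exact (Finset.pairwise_sort _ _).filter _
  · exact Finset.pairwise_sort _ _

lemma bW_eq_over (g : ℤ →₀ ℤ) (s : Finset ℤ) (hs : g.support ⊆ s) :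
    bW g = ((s.sort (· ≤ ·)).map fun i => bIdx i ^ g i).prod := by
  have hsupp : g.support = s.filter (fun i => g i ≠ 0) := by
    ext i
    simp only [Finsupp.mem_support_iff, Finset.mem_filter]
    exact ⟨fun h => ⟨hs (Finsupp.mem_support_iff.mpr h), h⟩, fun h => h.2⟩
  rw [bW, hsupp, ← sort_filter]
  exact (prod_filter _ _ _ (fun i _ hfi => by
    have : g i = 0 := by simpa using hfi
    rw [this, zpow_zero])).symm

lemma bW_split (g : ℤ →₀ ℤ) (j : ℤ) (s : Finset ℤ) (hs : g.support ⊆ s) (hj : j ∈ s) :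
    bW g = (((s.sort (· ≤ ·)).filter (fun i => decide (i < j))).map
              (fun i => bIdx i ^ g i)).prod
         * bIdx j ^ g j
         * (((s.sort (· ≤ ·)).filter (fun i => decide (j < i))).map
              (fun i => bIdx i ^ g i)).prod := by
  rw [bW_eq_over g s hs]
  conv_lhs => rw [split3 j _ (Finset.pairwise_sort _ _)]
  rw [filter_eq_singleton _ (Finset.sort_nodup _ _) ((Finset.mem_sort _).mpr hj)]
  simp [List.map_append, List.prod_append, mul_assoc]

/-! ## The key computation and the theorem -/

lemma cn_list_prod (v : GroupA) (L : List ℤ) (F : ℤ → GroupA) :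
    cn v ((L.map F).prod) = (L.map fun i => cn v (F i)).prod := by
  rw [(cn v).map_list_prod, List.map_map]
  rfl

lemma key (f : ℤ →₀ ℤ) (j : ℤ) :
    bIdx j * cn (dIdx j) (bW f) = bW (f + Finsupp.single j 1) := by
  classical
  set g := f + Finsupp.single j 1 with hg
  set s := (f.support ∪ g.support) ∪ {j} with hs
  have hfs : f.support ⊆ s := fun i hi =>
    Finset.mem_union_left _ (Finset.mem_union_left _ hi)
  have hgs : g.support ⊆ s := fun i hi =>
    Finset.mem_union_left _ (Finset.mem_union_right _ hi)
  have hjs : j ∈ s := Finset.mem_union_right _ (Finset.mem_singleton_self j)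
  set L := s.sort (· ≤ ·) with hL
  set L1 := L.filter (fun i => decide (i < j)) with hL1
  set L3 := L.filter (fun i => decide (j < i)) with hL3
  have hmem1 : ∀ i ∈ L1, i < j := fun i hi => by
    have := (List.mem_filter.mp hi).2; simpa using this
  have hmem3 : ∀ i ∈ L3, j < i := fun i hi => by
    have := (List.mem_filter.mp hi).2; simpa using this
  rw [bW_split f j s hfs hjs, bW_split g j s hgs hjs, map_mul, map_mul,
    cn_list_prod, cn_list_prod]
  have e1 : L1.map (fun i => cn (dIdx j) (bIdx i ^ f i)) =
      L1.map (fun i => cn (bIdx j) (bIdx i ^ f i)) :=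
    List.map_congr_left (fun i hi => by
      rw [map_zpow, map_zpow, cn_dIdx_bIdx, if_neg (by have := hmem1 i hi; omega)])
  have e3 : L3.map (fun i => cn (dIdx j) (bIdx i ^ f i)) =
      L3.map (fun i => bIdx i ^ f i) :=
    List.map_congr_left (fun i hi => by
      rw [map_zpow, cn_dIdx_bIdx, if_pos (hmem3 i hi)])
  have emid : cn (dIdx j) (bIdx j ^ f j) = bIdx j ^ f j := by
    rw [map_zpow, cn_dIdx_bIdx, if_neg (lt_irrefl j),
      cn_of_commute (Commute.refl (bIdx j))]
  rw [e1, e3, emid]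
  have e1' : (L1.map fun i => cn (bIdx j) (bIdx i ^ f i)).prod =
      cn (bIdx j) ((L1.map fun i => bIdx i ^ f i).prod) := (cn_list_prod _ _ _).symm
  rw [e1']
  have t1 : L1.map (fun i => bIdx i ^ g i) = L1.map (fun i => bIdx i ^ f i) :=
    List.map_congr_left (fun i hi => by
      have hij : j ≠ i := by have := hmem1 i hi; omega
      rw [hg, Finsupp.add_apply, Finsupp.single_eq_of_ne' hij, add_zero])
  have t3 : L3.map (fun i => bIdx i ^ g i) = L3.map (fun i => bIdx i ^ f i) :=
    List.map_congr_left (fun i hi => by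
      have hij : j ≠ i := by have := hmem3 i hi; omega
      rw [hg, Finsupp.add_apply, Finsupp.single_eq_of_ne' hij, add_zero])
  have tmid : g j = f j + 1 := by rw [hg]; simp
  rw [t1, t3, tmid, cn_apply]
  group

/-- In `𝒜`: `d_j⁻¹ a_f d_j = a_{f_j⁺}` and `d_j a_f d_j⁻¹ = a_{f_j⁻}` for all `f ∈ E`, `j ∈ ℤ`. -/
theorem stmt8 (f : ℤ →₀ ℤ) (j : ℤ) :
    (dIdx j)⁻¹ * aW f * dIdx j = aW (f + Finsupp.single j 1) ∧
    dIdx j * aW f * (dIdx j)⁻¹ = aW (f + Finsupp.single j (-1)) := by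
  have main : ∀ h : ℤ →₀ ℤ,
      (dIdx j)⁻¹ * aW h * dIdx j = aW (h + Finsupp.single j 1) := by
    intro h
    show cn (dIdx j) (cn (bW h) aA) = _
    rw [cn_cn, cn_dIdx_a, ← cn_mul, key]
    rfl
  refine ⟨main f, ?_⟩
  have h2 := main (f + Finsupp.single j (-1))
  have h3 : f + Finsupp.single j (-1) + Finsupp.single j 1 = f := by
    rw [add_assoc, ← Finsupp.single_add]
    norm_num
  rw [h3] at h2
  rw [← h2]
  group
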